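/- Let e_z = (0,0,1) ∈ ℝ³, θ_max ∈ (0, π/2], and let F = {f ∈ ℝ³ : ‖f‖ = 1, fᵀe_z ≥ cos θ_max} be a spherical cap. Given a unit vector s ∈ ℝ³ with s ≠ ±e_z, the point of F maximizing fᵀs is: f* = s if sᵀe_z ≥ cos θ_max; otherwise f* = cos θ_max · e_z + sin θ_max · a/‖a‖, where a = s - (sᵀe_z)e_z. -/

import Mathlib

open Real

lemma arccos_antitone {x y : ℝ} (h : x ≤ y) : Real.arccos y ≤ Real.arccos x := by
  rw [Real.arccos_eq_pi_div_two_sub_arcsin, Real.arccos_eq_pi_div_two_sub_arcsin]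
  linarith [Real.monotone_arcsin h]

lemma aux_trig (θ c u : ℝ) (hθ0 : 0 ≤ θ) (hθπ : θ ≤ Real.pi)
    (hc1 : -1 ≤ c) (hc : c ≤ Real.cos θ) (hu : Real.cos θ ≤ u) (hu1 : u ≤ 1) :
    u * c + Real.sqrt (1 - u ^ 2) * Real.sqrt (1 - c ^ 2)
      ≤ Real.cos θ * c + Real.sin θ * Real.sqrt (1 - c ^ 2) := by
  have hu0 : -1 ≤ u := le_trans (Real.neg_one_le_cos θ) hu
  have hcc : c ≤ 1 := le_trans hc (Real.cos_le_one θ)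
  set φ := Real.arccos u with hφdef
  set ψ := Real.arccos c with hψdef
  have hφ : Real.cos φ = u := Real.cos_arccos hu0 hu1
  have hψ : Real.cos ψ = c := Real.cos_arccos hc1 hcc
  have hsφ : Real.sin φ = Real.sqrt (1 - u ^ 2) := Real.sin_arccos u
  have hsψ : Real.sin ψ = Real.sqrt (1 - c ^ 2) := Real.sin_arccos c
  have hφθ : φ ≤ θ := by
    have := arccos_antitone hu
    rwa [Real.arccos_cos hθ0 hθπ] at this
  have hθψ : θ ≤ ψ := by
    have := arccos_antitone hc
    rwa [Real.arccos_cos hθ0 hθπ] at this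
  have hψπ : ψ ≤ Real.pi := Real.arccos_le_pi c
  have hφ0 : 0 ≤ φ := Real.arccos_nonneg u
  have h1 : Real.cos (ψ - φ) ≤ Real.cos (ψ - θ) :=
    Real.cos_le_cos_of_nonneg_of_le_pi (by linarith) (by linarith) (by linarith)
  rw [Real.cos_sub, Real.cos_sub, hφ, hψ, hsφ, hsψ] at h1
  nlinarith [h1]

set_option maxHeartbeats 1000000 in
/-- projection of a unit vector `s` onto the spherical cap
`F = {f : ‖f‖ = 1, fᵀe_z ≥ cos θ_max}` maximizes the linear functional `f ↦ fᵀs`. -/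
theorem stmt_12 (θmax : ℝ) (hθ : θmax ∈ Set.Ioc 0 (Real.pi / 2))
    (ez s : EuclideanSpace ℝ (Fin 3))
    (hez : ez = ![(0 : ℝ), 0, 1]) (hs : ‖s‖ = 1) (hs1 : s ≠ ez) (hs2 : s ≠ -ez)
    (a : EuclideanSpace ℝ (Fin 3)) (ha : a = s - (inner ℝ s ez : ℝ) • ez)
    (fstar : EuclideanSpace ℝ (Fin 3))
    (hf : fstar = if Real.cos θmax ≤ (inner ℝ s ez : ℝ) then s
      else Real.cos θmax • ez + Real.sin θmax • (‖a‖⁻¹ • a)) :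
    (‖fstar‖ = 1 ∧ Real.cos θmax ≤ (inner ℝ fstar ez : ℝ)) ∧
    ∀ f : EuclideanSpace ℝ (Fin 3), ‖f‖ = 1 → Real.cos θmax ≤ (inner ℝ f ez : ℝ) →
      (inner ℝ f s : ℝ) ≤ (inner ℝ fstar s : ℝ) := by
  obtain ⟨hθ0, hθ2⟩ := hθ
  have hpi := Real.pi_pos
  have hθπ : θmax ≤ Real.pi := by linarith
  have hez1 : ‖ez‖ = 1 := by
    rw [EuclideanSpace.norm_eq, hez]
    simp [Fin.sum_univ_three]
  set c : ℝ := inner ℝ s ez with hc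
  have hezez : (inner ℝ ez ez : ℝ) = 1 := by
    rw [real_inner_self_eq_norm_sq, hez1]; norm_num
  have hss : (inner ℝ s s : ℝ) = 1 := by
    rw [real_inner_self_eq_norm_sq, hs]; norm_num
  have hezs : (inner ℝ ez s : ℝ) = c := by
    rw [← real_inner_comm ez s, ← hc]
  have haez : (inner ℝ a ez : ℝ) = 0 := by
    rw [ha]
    simp only [inner_sub_left, real_inner_smul_left, hezez, ← hc]
    ring
  have heza : (inner ℝ ez a : ℝ) = 0 := by
    rw [← real_inner_comm ez a]; exact haez
  have has : (inner ℝ a s : ℝ) = 1 - c ^ 2 := by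
    rw [ha]
    simp only [inner_sub_left, real_inner_smul_left, hss, hezs, ← hc]
    ring
  have haa : (inner ℝ a a : ℝ) = 1 - c ^ 2 := by
    rw [ha]
    simp only [inner_sub_left, inner_sub_right, real_inner_smul_left,
      real_inner_smul_right, hss, hezez, hezs, ← hc]
    ring
  have ha0 : a ≠ 0 := by
    intro h
    have hsa : s = c • ez := by
      have h2 := ha; rw [h] at h2
      have h3 : (0 : EuclideanSpace ℝ (Fin 3)) + c • ez = s := by rw [h2]; abel
      simpa using h3.symm
    have habs : |c| = 1 := by
      have h4 := congrArg norm hsa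
      rw [hs, norm_smul, hez1] at h4
      simpa using h4.symm
    rcases (abs_eq (by norm_num : (0:ℝ) ≤ 1)).mp habs with h1 | h1
    · exact hs1 (by rw [hsa, h1, one_smul])
    · exact hs2 (by rw [hsa, h1, neg_one_smul])
  have hna : 0 < ‖a‖ := norm_pos_iff.mpr ha0
  have hna2 : ‖a‖ ^ 2 = 1 - c ^ 2 := by
    rw [← real_inner_self_eq_norm_sq, haa]
  have hnaeq : ‖a‖ = Real.sqrt (1 - c ^ 2) := by
    rw [← hna2, Real.sqrt_sq hna.le]
  have hc2 : c ^ 2 < 1 := by nlinarith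
  have hcm1 : -1 ≤ c := by nlinarith
  have hc1 : c ≤ 1 := by nlinarith
  have hsdecomp : s = c • ez + a := by rw [ha]; abel
  by_cases hcond : Real.cos θmax ≤ c
  · rw [if_pos hcond] at hf
    refine ⟨⟨by rw [hf]; exact hs, by rw [hf, ← hc]; exact hcond⟩, ?_⟩
    intro f hf1 hf2
    rw [hf]
    calc (inner ℝ f s : ℝ) ≤ ‖f‖ * ‖s‖ := real_inner_le_norm f s
      _ = 1 := by rw [hf1, hs]; ring
      _ = (inner ℝ s s : ℝ) := hss.symm
  · rw [if_neg hcond] at hf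
    push_neg at hcond
    have hst0 : 0 ≤ Real.sin θmax := Real.sin_nonneg_of_nonneg_of_le_pi hθ0.le hθπ
    have hts : Real.cos θmax ^ 2 + Real.sin θmax ^ 2 = 1 := by
      rw [add_comm]; exact Real.sin_sq_add_cos_sq θmax
    have hfez : (inner ℝ fstar ez : ℝ) = Real.cos θmax := by
      rw [hf]
      simp only [inner_add_left, real_inner_smul_left, hezez, haez]
      ring
    have hfa : (inner ℝ fstar a : ℝ) = Real.sin θmax * ‖a‖ := by
      rw [hf]
      simp only [inner_add_left, real_inner_smul_left, heza, haa, ← hna2]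
      field_simp
      ring
    have hfs : (inner ℝ fstar s : ℝ) =
        Real.cos θmax * c + Real.sin θmax * Real.sqrt (1 - c ^ 2) := by
      rw [hsdecomp, inner_add_right, real_inner_smul_right, hfez, hfa, hnaeq]
      ring
    have hcos0 : 0 ≤ Real.cos θmax := Real.cos_nonneg_of_mem_Icc ⟨by linarith, hθ2⟩
    have hnormu : ‖(‖a‖⁻¹ • a : EuclideanSpace ℝ (Fin 3))‖ = 1 := by
      rw [norm_smul, norm_inv, norm_norm]
      field_simp
    have hinner0 : (inner ℝ (Real.cos θmax • ez)
        (Real.sin θmax • (‖a‖⁻¹ • a)) : ℝ) = 0 := by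
      rw [real_inner_smul_left, real_inner_smul_right, real_inner_smul_right, heza]
      ring
    have hfnorm : ‖fstar‖ = 1 := by
      have h3 : ‖fstar‖ ^ 2 = 1 := by
        rw [hf, norm_add_sq_real, hinner0, norm_smul, norm_smul, hez1, hnormu,
          Real.norm_eq_abs, Real.norm_eq_abs, abs_of_nonneg hcos0, abs_of_nonneg hst0]
        nlinarith [hts]
      nlinarith [norm_nonneg fstar]
    refine ⟨⟨hfnorm, by rw [hfez]⟩, ?_⟩
    intro f hf1 hf2
    set u : ℝ := inner ℝ f ez with hu
    have hu1 : u ≤ 1 := by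
      calc u ≤ ‖f‖ * ‖ez‖ := real_inner_le_norm f ez
        _ = 1 := by rw [hf1, hez1]; ring
    set w : EuclideanSpace ℝ (Fin 3) := f - u • ez with hw
    have hff : (inner ℝ f f : ℝ) = 1 := by
      rw [real_inner_self_eq_norm_sq, hf1]; norm_num
    have hezf : (inner ℝ ez f : ℝ) = u := by
      rw [← real_inner_comm ez f, ← hu]
    have hww : (inner ℝ w w : ℝ) = 1 - u ^ 2 := by
      rw [hw]
      simp only [inner_sub_left, inner_sub_right, real_inner_smul_left,
        real_inner_smul_right, hff, hezez, hezf, ← hu]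
      ring
    have hnw : ‖w‖ = Real.sqrt (1 - u ^ 2) := by
      rw [← Real.sqrt_sq (norm_nonneg w), ← real_inner_self_eq_norm_sq, hww]
    have hwa : (inner ℝ w a : ℝ) ≤ Real.sqrt (1 - u ^ 2) * Real.sqrt (1 - c ^ 2) := by
      calc (inner ℝ w a : ℝ) ≤ ‖w‖ * ‖a‖ := real_inner_le_norm w a
        _ = Real.sqrt (1 - u ^ 2) * Real.sqrt (1 - c ^ 2) := by rw [hnw, hnaeq]
    have hfa' : (inner ℝ f a : ℝ) = (inner ℝ w a : ℝ) := by
      rw [hw]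
      simp only [inner_sub_left, real_inner_smul_left, heza]
      ring
    have hfsval : (inner ℝ f s : ℝ) = u * c + (inner ℝ w a : ℝ) := by
      rw [hsdecomp, inner_add_right, real_inner_smul_right, ← hu, ← hfa']
      ring
    have key := aux_trig θmax c u hθ0.le hθπ hcm1 hcond.le hf2 hu1
    rw [hfsval, hfs]
    linarith
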